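/- Let R be a Cohen-Macaulay local domain and let I = (f_1, ..., f_r) be an ideal generated by a regular sequence of length r (a complete intersection of codimension r). Then the kernel of the canonical surjection from the polynomial ring S = R[T_1, ..., T_r] onto the Rees algebra of I (sending T_i to f_i t) is generated by the 2x2 minors G_{ij} = f_i T_j - f_j T_i of the 2xr matrix with rows (f_1,...,f_r) and (T_1,...,T_r). -/

import Mathlib

open MvPolynomial

/-- The canonical `R`-algebra map `R[T₁,…,T_r] → R[t]` sending `Tᵢ` to `fᵢ·t`.
Its image is the Rees algebra of the ideal `I = (f₁,…,f_r)` and its kernel is the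
defining ideal of the Rees algebra. -/
noncomputable def reesKernelMap {R : Type*} [CommRing R] {r : ℕ} (f : Fin r → R) :
    MvPolynomial (Fin r) R →ₐ[R] Polynomial R :=
  MvPolynomial.aeval fun i => Polynomial.C (f i) * Polynomial.X

/-- A Cohen–Macaulay local ring: there is a regular sequence contained in the maximal
ideal whose length equals the Krull dimension of the ring. -/
def IsCohenMacaulayLocalRing (R : Type*) [CommRing R] [IsLocalRing R] : Prop :=
  ∃ rs : List R, (∀ x ∈ rs, x ∈ IsLocalRing.maximalIdeal R) ∧
    RingTheory.Sequence.IsRegular R rs ∧ (rs.length : WithBot (WithTop ℕ)) = ringKrullDim R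

namespace ReesCI

variable {R : Type*} [CommRing R]

/-- The ideal generated by the Koszul relations `fᵢ Tⱼ - fⱼ Tᵢ`. -/
noncomputable def kos {r : ℕ} (f : Fin r → R) : Ideal (MvPolynomial (Fin r) R) :=
  Ideal.span { g : MvPolynomial (Fin r) R |
    ∃ i j : Fin r, g = MvPolynomial.C (f i) * MvPolynomial.X j
      - MvPolynomial.C (f j) * MvPolynomial.X i }

lemma degree_add {r : ℕ} (a b : Fin r →₀ ℕ) : (a + b).degree = a.degree + b.degree := by
  simp [Finsupp.degree_eq_weight_one, map_add]

lemma degree_single {r : ℕ} (i : Fin r) (n : ℕ) : (Finsupp.single i n).degree = n := by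
  classical
  rcases eq_or_ne n 0 with h | h
  · simp [h, Finsupp.degree]
  · simp [Finsupp.degree_apply, Finsupp.support_single_ne_zero _ h]

lemma degree_mapDomain {r s : ℕ} (g : Fin r → Fin s) (hg : Function.Injective g)
    (m : Fin r →₀ ℕ) : (m.mapDomain g).degree = m.degree := by
  classical
  rw [Finsupp.degree_apply, Finsupp.degree_apply, Finsupp.mapDomain_support_of_injective hg]
  rw [Finset.sum_image (fun a _ b _ h => hg h)]
  exact Finset.sum_congr rfl fun i _ => by rw [Finsupp.mapDomain_apply hg]

lemma exists_shift {r d : ℕ} (F : MvPolynomial (Fin r) R) (hF : F.IsHomogeneous (d+1)) :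
    ∃ G : Fin r → MvPolynomial (Fin r) R,
      (∀ i, (G i).IsHomogeneous d) ∧ F = ∑ i, MvPolynomial.X i * G i := by
  classical
  rcases eq_or_ne F 0 with rfl | hF0
  · exact ⟨0, fun i => isHomogeneous_zero _ _ _, by simp⟩
  obtain ⟨m₁, hm₁⟩ := support_nonempty.mpr hF0
  have hdeg : ∀ m ∈ F.support, Finsupp.degree m = d + 1 :=
    fun m hm => by rw [Finsupp.degree_eq_weight_one]; exact hF (mem_support_iff.mp hm)
  have hne : ∀ m ∈ F.support, m ≠ 0 := by
    intro m hm h0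
    have := hdeg m hm
    simp [h0] at this
  haveI : Nonempty (Fin r) := by
    obtain ⟨i, hi⟩ := Finsupp.ne_iff.mp (hne m₁ hm₁)
    exact ⟨i⟩
  set pick : (Fin r →₀ ℕ) → Fin r :=
    fun m => if h : ∃ i, m i ≠ 0 then h.choose else Classical.arbitrary _ with hpickdef
  have hpick : ∀ m : Fin r →₀ ℕ, m ≠ 0 → m (pick m) ≠ 0 := by
    intro m hm
    have h : ∃ i, m i ≠ 0 := by
      obtain ⟨i, hi⟩ := Finsupp.ne_iff.mp hm
      exact ⟨i, by simpa using hi⟩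
    simpa [hpickdef, dif_pos h] using h.choose_spec
  have hle : ∀ m ∈ F.support, Finsupp.single (pick m) 1 ≤ m := by
    intro m hm
    exact Finsupp.single_le_iff.mpr (Nat.one_le_iff_ne_zero.mpr (hpick m (hne m hm)))
  refine ⟨fun i => ∑ m ∈ F.support,
    if pick m = i then monomial (m - Finsupp.single i 1) (coeff m F) else 0, ?_, ?_⟩
  · intro i
    apply IsHomogeneous.sum
    intro m hm
    split_ifs with h
    · apply isHomogeneous_monomial
      subst h
      have hcan := tsub_add_cancel_of_le (hle m hm)
      have := degree_add (m - Finsupp.single (pick m) 1) (Finsupp.single (pick m) 1)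
      rw [hcan, degree_single, hdeg m hm] at this
      omega
    · exact isHomogeneous_zero _ _ _
  · calc F = ∑ m ∈ F.support, monomial m (coeff m F) := as_sum F
    _ = ∑ m ∈ F.support, ∑ i : Fin r,
        (if pick m = i then monomial (Finsupp.single i 1 + (m - Finsupp.single i 1)) (coeff m F) else 0) := by
        refine Finset.sum_congr rfl fun m hm => ?_
        rw [Finset.sum_ite_eq (Finset.univ) (pick m)
          (fun i => monomial (Finsupp.single i 1 + (m - Finsupp.single i 1)) (coeff m F))]
        rw [if_pos (Finset.mem_univ _), add_tsub_cancel_of_le (hle m hm)]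
    _ = ∑ i : Fin r, ∑ m ∈ F.support,
        (if pick m = i then monomial (Finsupp.single i 1 + (m - Finsupp.single i 1)) (coeff m F) else 0) :=
        Finset.sum_comm
    _ = ∑ i, MvPolynomial.X i * ∑ m ∈ F.support,
        (if pick m = i then monomial (m - Finsupp.single i 1) (coeff m F) else 0) := by
        refine Finset.sum_congr rfl fun i _ => ?_
        rw [Finset.mul_sum]
        refine Finset.sum_congr rfl fun m hm => ?_
        rw [mul_ite, mul_zero, X, monomial_mul, one_mul]

lemma coeff_mem_of_mem_kos {r : ℕ} {f : Fin r → R} {P : MvPolynomial (Fin r) R}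
    (hP : P ∈ kos f) (m : Fin r →₀ ℕ) : MvPolynomial.coeff m P ∈ Ideal.span (Set.range f) := by
  have h : kos f ≤ Ideal.map (C : R →+* MvPolynomial (Fin r) R) (Ideal.span (Set.range f)) := by
    rw [kos, Ideal.span_le]
    rintro g ⟨i, j, rfl⟩
    have hi : (C (f i) : MvPolynomial (Fin r) R) ∈
        Ideal.map (C : R →+* MvPolynomial (Fin r) R) (Ideal.span (Set.range f)) :=
      Ideal.mem_map_of_mem _ (Ideal.subset_span ⟨i, rfl⟩)
    have hj : (C (f j) : MvPolynomial (Fin r) R) ∈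
        Ideal.map (C : R →+* MvPolynomial (Fin r) R) (Ideal.span (Set.range f)) :=
      Ideal.mem_map_of_mem _ (Ideal.subset_span ⟨j, rfl⟩)
    exact Ideal.sub_mem _ (Ideal.mul_mem_right _ _ hi) (Ideal.mul_mem_right _ _ hj)
  exact MvPolynomial.mem_map_C_iff.mp (h hP) m

lemma prod_pow_mem {r : ℕ} (f : Fin r → R) (m : Fin r →₀ ℕ) :
    (∏ i : Fin r, f i ^ m i) ∈ (Ideal.span (Set.range f)) ^ m.degree := by
  classical
  rw [show (∏ i : Fin r, f i ^ m i) = ∏ i ∈ m.support, f i ^ m i from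
    (Finset.prod_subset (Finset.subset_univ _) (by
      intro i _ hi
      rw [Finsupp.notMem_support_iff.mp hi, pow_zero])).symm]
  rw [Finsupp.degree_apply]
  induction m.support using Finset.cons_induction with
  | empty => simp
  | cons i s his ih =>
      rw [Finset.prod_cons, Finset.sum_cons, pow_add]
      exact Ideal.mul_mem_mul
        (Ideal.pow_mem_pow (Ideal.subset_span (Set.mem_range_self i)) _) ih

lemma mem_pow_iff {r d : ℕ} (f : Fin r → R) (x : R) :
    x ∈ (Ideal.span (Set.range f)) ^ d ↔
      ∃ F : MvPolynomial (Fin r) R, F.IsHomogeneous d ∧ MvPolynomial.eval f F = x := by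
  constructor
  · induction d generalizing x with
    | zero =>
        intro _
        exact ⟨C x, isHomogeneous_C _ _, by simp⟩
    | succ d ih =>
        rw [pow_succ]
        intro hx
        refine Submodule.mul_induction_on hx ?_ ?_
        · intro a ha b hb
          obtain ⟨F, hF, hFa⟩ := ih _ ha
          obtain ⟨c, hc⟩ := (Submodule.mem_span_range_iff_exists_fun R).mp hb
          refine ⟨F * ∑ i, C (c i) * X i, hF.mul ?_, ?_⟩
          · exact IsHomogeneous.sum _ _ _ fun i _ => isHomogeneous_C_mul_X _ _
          · rw [map_mul, hFa, ← hc]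
            simp [smul_eq_mul]
        · intro a b iha ihb
          obtain ⟨F1, h1, e1⟩ := iha
          obtain ⟨F2, h2, e2⟩ := ihb
          exact ⟨F1 + F2, h1.add h2, by rw [map_add, e1, e2]⟩
  · rintro ⟨F, hF, rfl⟩
    rw [eval_eq']
    apply Ideal.sum_mem
    intro m hm
    have hdm : m.degree = d := by
      rw [Finsupp.degree_eq_weight_one]
      exact hF (mem_support_iff.mp hm)
    rw [← hdm]
    exact Ideal.mul_mem_left _ _ (prod_pow_mem f m)

lemma eval_mem_pow_succ {r d : ℕ} (f : Fin r → R) {F : MvPolynomial (Fin r) R}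
    (hF : F.IsHomogeneous d)
    (hc : ∀ m, MvPolynomial.coeff m F ∈ Ideal.span (Set.range f)) :
    MvPolynomial.eval f F ∈ (Ideal.span (Set.range f)) ^ (d + 1) := by
  rw [eval_eq']
  apply Ideal.sum_mem
  intro m hm
  have hdm : m.degree = d := by
    rw [Finsupp.degree_eq_weight_one]
    exact hF (mem_support_iff.mp hm)
  rw [pow_succ, mul_comm ((Ideal.span (Set.range f))^d)]
  refine Ideal.mul_mem_mul (hc m) ?_
  rw [← hdm]
  exact prod_pow_mem f m

lemma quasi {r : ℕ} (f : Fin r → R)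
    (hA : ∀ (n : ℕ) (F : MvPolynomial (Fin r) R), F.IsHomogeneous n →
      MvPolynomial.eval f F = 0 → F ∈ kos f)
    {n : ℕ} {F : MvPolynomial (Fin r) R} (hF : F.IsHomogeneous n)
    (hev : MvPolynomial.eval f F ∈ (Ideal.span (Set.range f)) ^ (n + 1)) :
    ∀ m, MvPolynomial.coeff m F ∈ Ideal.span (Set.range f) := by
  intro m
  obtain ⟨G, hG, hGe⟩ := (mem_pow_iff f _).mp hev
  obtain ⟨H, hH, rfl⟩ := exists_shift G hG
  set G'' : MvPolynomial (Fin r) R := ∑ i, C (f i) * H i with hG''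
  have hG''h : G''.IsHomogeneous n :=
    IsHomogeneous.sum _ _ _ fun i _ => ((hH i).C_mul (f i))
  have hG''e : MvPolynomial.eval f G'' = MvPolynomial.eval f F := by
    rw [hG'', ← hGe]
    simp [mul_comm]
  have hdiff : F - G'' ∈ kos f := by
    apply hA n _ (hF.sub hG''h)
    rw [map_sub, hG''e, sub_self]
  have h1 : MvPolynomial.coeff m (F - G'') ∈ Ideal.span (Set.range f) :=
    coeff_mem_of_mem_kos hdiff m
  have h2 : MvPolynomial.coeff m G'' ∈ Ideal.span (Set.range f) := by
    rw [hG'', coeff_sum]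
    apply Ideal.sum_mem
    intro i _
    rw [coeff_C_mul]
    exact Ideal.mul_mem_right _ _ (Ideal.subset_span ⟨i, rfl⟩)
  have : MvPolynomial.coeff m F = MvPolynomial.coeff m (F - G'') + MvPolynomial.coeff m G'' := by
    rw [coeff_sub]; ring
  rw [this]
  exact Ideal.add_mem _ h1 h2

lemma koszul_shift {r d : ℕ} (f : Fin r → R) (i₀ : Fin r) {F : MvPolynomial (Fin r) R}
    (hF : F.IsHomogeneous (d+1)) :
    ∃ F' : MvPolynomial (Fin r) R, F'.IsHomogeneous d ∧
      C (f i₀) * F - X i₀ * F' ∈ kos f := by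
  obtain ⟨H, hH, rfl⟩ := exists_shift F hF
  refine ⟨∑ i, C (f i) * H i, IsHomogeneous.sum _ _ _ fun i _ => ((hH i).C_mul (f i)), ?_⟩
  have : C (f i₀) * (∑ i, X i * H i) - X i₀ * ∑ i, C (f i) * H i
      = ∑ i, H i * (C (f i₀) * X i - C (f i) * X i₀) := by
    rw [Finset.mul_sum, Finset.mul_sum, ← Finset.sum_sub_distrib]
    exact Finset.sum_congr rfl fun i _ => by ring
  rw [this]
  apply Ideal.sum_mem
  intro i _
  exact Ideal.mul_mem_left _ _ (Ideal.subset_span ⟨i₀, i, rfl⟩)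

lemma rename_kos_mem {r : ℕ} (f : Fin (r+1) → R) {P : MvPolynomial (Fin r) R}
    (hP : P ∈ kos (f ∘ Fin.castSucc)) :
    rename Fin.castSucc P ∈ kos f := by
  have hmap : Ideal.map (rename (R := R) Fin.castSucc) (kos (f ∘ Fin.castSucc)) ≤ kos f := by
    rw [kos, Ideal.map_span, Ideal.span_le]
    rintro g ⟨g', ⟨i, j, rfl⟩, rfl⟩
    refine Ideal.subset_span ⟨Fin.castSucc i, Fin.castSucc j, ?_⟩
    simp [map_sub, map_mul, rename_C, rename_X, Function.comp]
  exact hmap (Ideal.mem_map_of_mem _ hP)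

lemma split_last {r d : ℕ} (F : MvPolynomial (Fin (r+1)) R) (hF : F.IsHomogeneous (d+1)) :
    ∃ (G : MvPolynomial (Fin r) R) (H : MvPolynomial (Fin (r+1)) R),
      G.IsHomogeneous (d+1) ∧ H.IsHomogeneous d ∧
        F = rename Fin.castSucc G + X (Fin.last r) * H := by
  classical
  set i₀ := Fin.last r
  have hdeg : ∀ m ∈ F.support, Finsupp.degree m = d + 1 := fun m hm => by
    rw [Finsupp.degree_eq_weight_one]; exact hF (mem_support_iff.mp hm)
  set s0 := F.support.filter (fun m => m i₀ = 0) with hs0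
  set s1 := F.support.filter (fun m => ¬ (m i₀ = 0)) with hs1
  have hsub : ∀ m ∈ s0, (m.comapDomain Fin.castSucc
      (Fin.castSucc_injective r).injOn).mapDomain Fin.castSucc = m := by
    intro m hm
    apply Finsupp.mapDomain_comapDomain _ (Fin.castSucc_injective r)
    intro i hi
    have h1 : m i ≠ 0 := Finsupp.mem_support_iff.mp hi
    have h2 : m i₀ = 0 := (Finset.mem_filter.mp hm).2
    have : i ≠ i₀ := fun h => h1 (h ▸ h2)
    obtain ⟨j, hj⟩ := Fin.exists_castSucc_eq.mpr this
    exact ⟨j, hj⟩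
  refine ⟨∑ m ∈ s0, monomial (m.comapDomain Fin.castSucc
      (Fin.castSucc_injective r).injOn) (coeff m F),
    ∑ m ∈ s1, monomial (m - Finsupp.single i₀ 1) (coeff m F), ?_, ?_, ?_⟩
  · apply IsHomogeneous.sum
    intro m hm
    apply isHomogeneous_monomial
    have := degree_mapDomain Fin.castSucc (Fin.castSucc_injective r)
      (m.comapDomain Fin.castSucc (Fin.castSucc_injective r).injOn)
    rw [hsub m hm] at this
    rw [← this]
    exact hdeg m (Finset.mem_filter.mp hm).1
  · apply IsHomogeneous.sum
    intro m hm
    apply isHomogeneous_monomial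
    have hm1 : m i₀ ≠ 0 := (Finset.mem_filter.mp hm).2
    have hle : Finsupp.single i₀ 1 ≤ m :=
      Finsupp.single_le_iff.mpr (Nat.one_le_iff_ne_zero.mpr hm1)
    have hcan := tsub_add_cancel_of_le hle
    have h2 := degree_add (m - Finsupp.single i₀ 1) (Finsupp.single i₀ 1)
    rw [hcan, degree_single, hdeg m (Finset.mem_filter.mp hm).1] at h2
    omega
  · rw [map_sum, Finset.mul_sum]
    have e0 : ∀ m ∈ s0, rename Fin.castSucc (monomial (m.comapDomain Fin.castSucc
        (Fin.castSucc_injective r).injOn) (coeff m F)) = monomial m (coeff m F) := by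
      intro m hm
      rw [rename_monomial, hsub m hm]
    have e1 : ∀ m ∈ s1, X i₀ * monomial (m - Finsupp.single i₀ 1) (coeff m F)
        = monomial m (coeff m F) := by
      intro m hm
      have hm1 : m i₀ ≠ 0 := (Finset.mem_filter.mp hm).2
      have hle : Finsupp.single i₀ 1 ≤ m :=
        Finsupp.single_le_iff.mpr (Nat.one_le_iff_ne_zero.mpr hm1)
      rw [X, monomial_mul, one_mul, add_tsub_cancel_of_le hle]
    rw [Finset.sum_congr rfl e0, Finset.sum_congr rfl e1, hs0, hs1,
      Finset.sum_filter_add_sum_filter_not]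
    exact as_sum F

lemma ofList_ofFn {r : ℕ} (f : Fin r → R) :
    Ideal.ofList (List.ofFn f) = Ideal.span (Set.range f) := by
  show Ideal.span {x | x ∈ List.ofFn f} = _
  congr 1
  ext x
  rw [Set.mem_setOf_eq, List.mem_ofFn, Set.mem_range]

lemma span_ne_top {r : ℕ} {f : Fin r → R}
    (h : RingTheory.Sequence.IsRegular R (List.ofFn f)) :
    Ideal.span (Set.range f) ≠ ⊤ := by
  intro htop
  apply h.top_ne_smul
  rw [ofList_ofFn, htop]
  rw [Ideal.smul_eq_mul]
  rw [Ideal.mul_top]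

lemma reg_prefix {r : ℕ} {f : Fin (r+1) → R}
    (h : RingTheory.Sequence.IsRegular R (List.ofFn f)) :
    RingTheory.Sequence.IsRegular R (List.ofFn (f ∘ Fin.castSucc)) := by
  have hsplit : List.ofFn f = (List.ofFn (f ∘ Fin.castSucc)) ++ [f (Fin.last r)] := by
    rw [List.ofFn_succ', List.concat_eq_append]
    rfl
  constructor
  · have := h.toIsWeaklyRegular
    rw [hsplit, RingTheory.Sequence.isWeaklyRegular_append_iff] at this
    exact this.1
  · intro htop
    apply h.top_ne_smul
    rw [hsplit]
    refine (le_antisymm le_top ?_).symm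
    calc (⊤ : Submodule R R) = Ideal.ofList (List.ofFn (f ∘ Fin.castSucc)) • ⊤ := htop
    _ ≤ Ideal.ofList (List.ofFn (f ∘ Fin.castSucc) ++ [f (Fin.last r)]) • ⊤ := by
        apply Submodule.smul_mono_left
        rw [Ideal.ofList_append]
        exact le_sup_left

lemma reg_last {r : ℕ} {f : Fin (r+1) → R}
    (h : RingTheory.Sequence.IsRegular R (List.ofFn f)) :
    ∀ x : R, f (Fin.last r) * x ∈ Ideal.span (Set.range (f ∘ Fin.castSucc)) →
      x ∈ Ideal.span (Set.range (f ∘ Fin.castSucc)) := by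
  have hsplit : List.ofFn f = (List.ofFn (f ∘ Fin.castSucc)) ++ [f (Fin.last r)] := by
    rw [List.ofFn_succ', List.concat_eq_append]
    rfl
  have hw := h.toIsWeaklyRegular
  rw [hsplit, RingTheory.Sequence.isWeaklyRegular_append_iff] at hw
  have hreg := (RingTheory.Sequence.isWeaklyRegular_singleton_iff _ _).mp hw.2
  intro x hx
  set I' : Ideal R := Ideal.span (Set.range (f ∘ Fin.castSucc)) with hI'
  have hIeq : (Ideal.ofList (List.ofFn (f ∘ Fin.castSucc)) • ⊤ : Submodule R R) = I' := by
    rw [ofList_ofFn, Ideal.smul_eq_mul, Ideal.mul_top]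
  have h0 : Submodule.Quotient.mk (p := (Ideal.ofList (List.ofFn (f ∘ Fin.castSucc)) • ⊤ : Submodule R R)) (f (Fin.last r) * x) = 0 := by
    rw [Submodule.Quotient.mk_eq_zero, hIeq]
    exact hx
  have h1 : f (Fin.last r) • (Submodule.Quotient.mk (p := (Ideal.ofList (List.ofFn (f ∘ Fin.castSucc)) • ⊤ : Submodule R R)) x) = f (Fin.last r) • (0 : R ⧸ (Ideal.ofList (List.ofFn (f ∘ Fin.castSucc)) • ⊤ : Submodule R R)) := by
    rw [smul_zero, ← Submodule.Quotient.mk_smul, smul_eq_mul]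
    exact h0
  have := hreg h1
  rw [← hIeq]
  rw [← Submodule.Quotient.mk_eq_zero]
  exact this

lemma last_ne_zero {r : ℕ} {f : Fin (r+1) → R}
    (h : RingTheory.Sequence.IsRegular R (List.ofFn f)) :
    f (Fin.last r) ≠ 0 := by
  intro h0
  have hlast := reg_last h
  have : Ideal.span (Set.range (f ∘ Fin.castSucc)) = ⊤ := by
    rw [Ideal.eq_top_iff_one]
    apply hlast
    rw [h0, zero_mul]
    exact Ideal.zero_mem _
  apply span_ne_top h
  rw [Ideal.eq_top_iff_one]
  apply Ideal.span_mono (s := Set.range (f ∘ Fin.castSucc))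
  · rintro _ ⟨i, rfl⟩
    exact ⟨Fin.castSucc i, rfl⟩
  · rw [this]
    exact Submodule.mem_top

lemma nzd {r : ℕ} (f : Fin r → R) (a : R)
    (hA : ∀ (n : ℕ) (F : MvPolynomial (Fin r) R), F.IsHomogeneous n →
      MvPolynomial.eval f F = 0 → F ∈ kos f)
    (ha : ∀ x, a * x ∈ Ideal.span (Set.range f) → x ∈ Ideal.span (Set.range f)) :
    ∀ (d : ℕ) (x : R), a * x ∈ (Ideal.span (Set.range f)) ^ d →
      x ∈ (Ideal.span (Set.range f)) ^ d := by
  intro d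
  induction d with
  | zero => intro x _; simp
  | succ d ih =>
      intro x hx
      have hx' : x ∈ (Ideal.span (Set.range f)) ^ d :=
        ih x (Ideal.pow_le_pow_right (Nat.le_succ d) hx)
      obtain ⟨F, hF, rfl⟩ := (mem_pow_iff f x).mp hx'
      have hev : MvPolynomial.eval f (MvPolynomial.C a * F) ∈
          (Ideal.span (Set.range f)) ^ (d + 1) := by
        rw [map_mul, eval_C]
        exact hx
      have hq := quasi f hA (hF.C_mul a) hev
      apply eval_mem_pow_succ f hF
      intro m
      apply ha
      have := hq m
      rwa [coeff_C_mul] at this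

lemma rees_monomial {r : ℕ} (f : Fin r → R) (m : Fin r →₀ ℕ) (c : R) :
    reesKernelMap f (monomial m c) =
      Polynomial.C (c * ∏ i ∈ m.support, f i ^ m i) * Polynomial.X ^ m.degree := by
  classical
  rw [reesKernelMap, aeval_monomial, Finsupp.prod]
  have h : ∀ i ∈ m.support, (Polynomial.C (f i) * Polynomial.X) ^ m i
      = Polynomial.C (f i ^ m i) * Polynomial.X ^ m i := by
    intro i _
    rw [mul_pow, ← Polynomial.C_pow]
  rw [Finset.prod_congr rfl h, Finset.prod_mul_distrib,
    ← map_prod (Polynomial.C : R →+* Polynomial R), Finset.prod_pow_eq_pow_sum,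
    Finsupp.degree_apply, Polynomial.algebraMap_eq, map_mul, ← mul_assoc]

lemma coeff_rees {r : ℕ} (f : Fin r → R) (P : MvPolynomial (Fin r) R) (d : ℕ) :
    (reesKernelMap f P).coeff d = MvPolynomial.eval f (homogeneousComponent d P) := by
  classical
  conv_lhs => rw [as_sum P]
  conv_rhs => rw [as_sum P]
  rw [map_sum, Polynomial.finset_sum_coeff, map_sum, map_sum]
  refine Finset.sum_congr rfl fun m _ => ?_
  rw [rees_monomial, Polynomial.coeff_C_mul, Polynomial.coeff_X_pow]
  have hmem : monomial m (coeff m P) ∈ homogeneousSubmodule (Fin r) R m.degree :=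
    (mem_homogeneousSubmodule _ _).mpr (isHomogeneous_monomial _ rfl)
  rw [homogeneousComponent_of_mem hmem]
  split_ifs with h1
  · rw [eval_monomial, Finsupp.prod, mul_one]
  · simp

attribute [local instance] MvPolynomial.gradedAlgebra

lemma component_mem_kos {r : ℕ} {f : Fin r → R} {P : MvPolynomial (Fin r) R}
    (hP : P ∈ kos f) (n : ℕ) : homogeneousComponent n P ∈ kos f := by
  have hhom : (kos f).IsHomogeneous (homogeneousSubmodule (Fin r) R) := by
    apply Ideal.homogeneous_span
    rintro g ⟨i, j, rfl⟩
    exact ⟨1, (mem_homogeneousSubmodule _ _).mpr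
      ((isHomogeneous_C_mul_X (f i) j).sub (isHomogeneous_C_mul_X (f j) i))⟩
  have := hhom n hP
  rwa [← decomposition.decompose'_apply]

lemma eval_eq_zero_of_mem_kos {r : ℕ} {f : Fin r → R} {P : MvPolynomial (Fin r) R}
    (hP : P ∈ kos f) : MvPolynomial.eval f P = 0 := by
  have h : kos f ≤ RingHom.ker (MvPolynomial.eval f) := by
    rw [kos, Ideal.span_le]
    rintro g ⟨i, j, rfl⟩
    rw [SetLike.mem_coe, RingHom.mem_ker, map_sub, map_mul, map_mul, eval_C, eval_C,
      eval_X, eval_X, mul_comm]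
    ring
  exact RingHom.mem_ker.mp (h hP)

/-- The main induction: a homogeneous polynomial vanishing on a regular sequence
belongs to the Koszul ideal. -/
lemma main [IsDomain R] : ∀ (r : ℕ) (f : Fin r → R),
    RingTheory.Sequence.IsRegular R (List.ofFn f) →
    ∀ (d : ℕ) (F : MvPolynomial (Fin r) R), F.IsHomogeneous d →
      MvPolynomial.eval f F = 0 → F ∈ kos f := by
  intro r
  induction r with
  | zero =>
      intro f _ d F _ hev
      have hFC : F = C (F.coeff 0) := eq_C_of_isEmpty F
      have : F.coeff 0 = 0 := by
        have := hev
        rw [hFC, eval_C] at this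
        exact this
      rw [hFC, this, map_zero]
      exact Ideal.zero_mem _
  | succ r IHr =>
      intro f hreg d
      have hreg' := reg_prefix hreg
      have hlast := reg_last hreg
      have hne := last_ne_zero hreg
      set f' : Fin r → R := f ∘ Fin.castSucc with hf'
      set i₀ := Fin.last r with hi₀
      have hA' : ∀ (n : ℕ) (F : MvPolynomial (Fin r) R), F.IsHomogeneous n →
          MvPolynomial.eval f' F = 0 → F ∈ kos f' := IHr f' hreg'
      induction d with
      | zero =>
          intro F hF hev
          have h0 : homogeneousComponent 0 F = F := by
            rw [homogeneousComponent_of_mem ((mem_homogeneousSubmodule _ _).mpr hF), if_pos rfl]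
          rw [← h0, homogeneousComponent_zero] at hev ⊢
          rw [eval_C] at hev
          rw [hev, map_zero]
          exact Ideal.zero_mem _
      | succ d IHd =>
          intro F hF hev
          obtain ⟨G, H, hG, hH, rfl⟩ := split_last F hF
          have heval : MvPolynomial.eval f' G + f i₀ * MvPolynomial.eval f H = 0 := by
            rw [← hev, map_add, map_mul, eval_X, eval_rename]
          set a := f i₀
          have h2 : a * (- MvPolynomial.eval f H) ∈ (Ideal.span (Set.range f')) ^ (d+1) := by
            have heq : a * (- MvPolynomial.eval f H) = MvPolynomial.eval f' G := by
              rw [mul_neg]; linear_combination -heval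
            rw [heq]
            exact (mem_pow_iff f' _).mpr ⟨G, hG, rfl⟩
          have h3 := nzd f' a hA' hlast (d+1) _ h2
          obtain ⟨K, hK, hKe⟩ := (mem_pow_iff f' _).mp h3
          have h4 : MvPolynomial.eval f' (G - C a * K) = 0 := by
            rw [map_sub, map_mul, eval_C, hKe, mul_neg]
            have heq : MvPolynomial.eval f' G = - (a * MvPolynomial.eval f H) := by
              linear_combination heval
            rw [heq]; ring
          have h5 : G - C a * K ∈ kos f' := hA' (d+1) _ (hG.sub (hK.C_mul a)) h4
          have hrenK : (rename Fin.castSucc K).IsHomogeneous (d+1) := hK.rename_isHomogeneous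
          obtain ⟨K', hK', h7⟩ := koszul_shift f i₀ hrenK
          have h6 : rename Fin.castSucc (G - C a * K) ∈ kos f := rename_kos_mem f h5
          have h8 : (rename Fin.castSucc G + X i₀ * H) - X i₀ * (K' + H) ∈ kos f := by
            have heq : (rename Fin.castSucc G + X i₀ * H) - X i₀ * (K' + H)
                = rename Fin.castSucc (G - C a * K)
                  + (C a * rename Fin.castSucc K - X i₀ * K') := by
              rw [map_sub, map_mul, rename_C]; ring
            rw [heq]
            exact Ideal.add_mem _ h6 h7
          have h9 : MvPolynomial.eval f (X i₀ * (K' + H)) = 0 := by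
            have h8' := eval_eq_zero_of_mem_kos h8
            rw [map_sub, hev, zero_sub, neg_eq_zero] at h8'
            exact h8'
          have h10 : MvPolynomial.eval f (K' + H) = 0 := by
            rw [map_mul, eval_X] at h9
            rcases mul_eq_zero.mp h9 with h | h
            · exact absurd h hne
            · exact h
          have h11 : K' + H ∈ kos f := IHd _ (hK'.add hH) h10
          have h12 : X i₀ * (K' + H) ∈ kos f := Ideal.mul_mem_left _ _ h11
          have h13 := Ideal.add_mem _ h8 h12
          rwa [sub_add_cancel] at h13

end ReesCI

/-- If `R` is a Cohen–Macaulay local domain and `I = (f₁,…,f_r)` is a complete intersection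
ideal of codimension `r` (i.e. generated by a regular sequence of length `r`), then the
defining ideal of the Rees algebra of `I`, i.e. the kernel of the canonical surjection
`R[T₁,…,T_r] → Rees(I)`, is generated by the elements `G_{ij} = fᵢ Tⱼ - fⱼ Tᵢ`. -/
theorem stmt0 {R : Type*} [CommRing R] [IsNoetherianRing R] [IsLocalRing R] [IsDomain R]
    (hCM : IsCohenMacaulayLocalRing R) {r : ℕ} (f : Fin r → R)
    (hreg : RingTheory.Sequence.IsRegular R (List.ofFn f)) :
    RingHom.ker (reesKernelMap f).toRingHom =
      Ideal.span { g : MvPolynomial (Fin r) R |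
        ∃ i j : Fin r, g = MvPolynomial.C (f i) * MvPolynomial.X j
          - MvPolynomial.C (f j) * MvPolynomial.X i } := by
  show RingHom.ker (reesKernelMap f).toRingHom = ReesCI.kos f
  apply le_antisymm
  · intro P hP
    have hP0 : reesKernelMap f P = 0 := RingHom.mem_ker.mp hP
    have hsum : P = ∑ i ∈ Finset.range (P.totalDegree + 1), homogeneousComponent i P :=
      (sum_homogeneousComponent P).symm
    rw [hsum]
    apply Ideal.sum_mem
    intro i _
    apply ReesCI.main r f hreg i _ (homogeneousComponent_isHomogeneous i P)
    rw [← ReesCI.coeff_rees, hP0, Polynomial.coeff_zero]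
  · rw [ReesCI.kos, Ideal.span_le]
    rintro g ⟨i, j, rfl⟩
    rw [SetLike.mem_coe, RingHom.mem_ker]
    show reesKernelMap f (MvPolynomial.C (f i) * MvPolynomial.X j
      - MvPolynomial.C (f j) * MvPolynomial.X i) = 0
    simp only [reesKernelMap, map_sub, map_mul, MvPolynomial.aeval_C, MvPolynomial.aeval_X,
      Polynomial.algebraMap_eq]
    ring
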